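/- Let u, v be rational numbers with (2u + 3)·v² + 1 ≠ 0, and set a = (u² + v²)/((2u + 3)·v² + 1), p = v·(a·v² + 1), q = a·v² − u, r = v·(a·v² − u), s = v² + 1. Then (p + q)⁴ + a·(r − s)⁴ = (p − q)⁴ + a·(r + s)⁴. -/

import Mathlib

theorem stmt_9 (u v : ℚ) (h : (2 * u + 3) * v ^ 2 + 1 ≠ 0)
    (a p q r s : ℚ)
    (ha : a = (u ^ 2 + v ^ 2) / ((2 * u + 3) * v ^ 2 + 1))
    (hp : p = v * (a * v ^ 2 + 1)) (hq : q = a * v ^ 2 - u)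
    (hr : r = v * (a * v ^ 2 - u)) (hs : s = v ^ 2 + 1) :
    (p + q) ^ 4 + a * (r - s) ^ 4 = (p - q) ^ 4 + a * (r + s) ^ 4 := by
  subst hp hq hr hs ha
  have h' : v ^ 2 * (u * 2 + 3) + 1 ≠ 0 := fun h2 => h (by linarith)
  field_simp
  ring
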